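/- arXiv:2003.03950 — 3 statements merged into one kernel-verified Lean document; each statement's English description precedes it below -/
import Mathlib

section
/- Let d_Θ, d_Y be positive integers, F a real d_Y × d_Θ matrix, f, y ∈ ℝ^{d_Y} and σ > 0. Define Σ = (I + σ⁻² FᵀF)⁻¹ (the matrix I + σ⁻²FᵀF is positive definite, hence invertible) and μ = σ⁻² Σ Fᵀ (y − f). Suppose θ : ℝ → ℝ^{d_Θ}, η : ℝ → ℝ^{d_Y}, v_θ : ℝ → ℝ^{d_Θ}, v_η : ℝ → ℝ^{d_Y} and λ : ℝ → ℝ^{d_Y} are differentiable curves satisfying, for all t ∈ ℝ: θ'(t) = v_θ(t), η'(t) = v_η(t), v_θ'(t) = −θ(t) − Fᵀ λ(t), v_η'(t) = −η(t) − σ λ(t), together with the constraints F θ(t) + f + σ η(t) − y = 0 and F v_θ(t) + σ v_η(t) = 0. Then θ is twice differentiable and satisfies θ''(t) = −(θ(t) − μ) for all t; that is, the θ-component of the constrained Hamiltonian dynamics coincides with the Hamiltonian dynamics θ'' = −Σ·Σ⁻¹(θ − μ) obtained from the Hamiltonian H(θ,p) = ½(θ−μ)ᵀΣ⁻¹(θ−μ)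 + ½ pᵀΣp, i.e. with the metric (mass matrix) set to the posterior precision matrix M = Σ⁻¹. -/
open Matrix

/-- **Theorem 1 (linear-Gaussian case).** For the linear-Gaussian model
`y = Fθ + f + ση` with standard normal priors, the `θ`-component of the constrained
Hamiltonian dynamics on the lifted manifold satisfies `θ'' = −(θ − μ)`, where
`μ = σ⁻² Σ Fᵀ (y − f)` and `Σ = (I + σ⁻² FᵀF)⁻¹` are the posterior mean and covariance;
i.e. it coincides with the Hamiltonian dynamics with metric `M = Σ⁻¹`. -/
theorem stmt0 (dΘ dY : ℕ) (hdΘ : 0 < dΘ) (hdY : 0 < dY)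
    (F : Matrix (Fin dY) (Fin dΘ) ℝ) (f y : Fin dY → ℝ) (σ : ℝ) (hσ : 0 < σ)
    (S : Matrix (Fin dΘ) (Fin dΘ) ℝ)
    (hS : S = (1 + (σ ^ 2)⁻¹ • (Fᵀ * F))⁻¹)
    (μ : Fin dΘ → ℝ)
    (hμ : μ = (σ ^ 2)⁻¹ • (S *ᵥ (Fᵀ *ᵥ (y - f))))
    (θ : ℝ → Fin dΘ → ℝ) (η : ℝ → Fin dY → ℝ)
    (vθ : ℝ → Fin dΘ → ℝ) (vη : ℝ → Fin dY → ℝ) (lam : ℝ → Fin dY → ℝ)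
    (hθ : ∀ t : ℝ, HasDerivAt θ (vθ t) t)
    (hη : ∀ t : ℝ, HasDerivAt η (vη t) t)
    (hvθ : ∀ t : ℝ, HasDerivAt vθ (-(θ t) - Fᵀ *ᵥ lam t) t)
    (hvη : ∀ t : ℝ, HasDerivAt vη (-(η t) - σ • lam t) t)
    (hpos : ∀ t : ℝ, F *ᵥ θ t + f + σ • η t - y = 0)
    (hmom : ∀ t : ℝ, F *ᵥ vθ t + σ • vη t = 0) :
    ∀ t : ℝ, HasDerivAt vθ (-(θ t - μ)) t := by
  have hσ2 : (σ ^ 2 : ℝ) ≠ 0 := by positivity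
  set A : Matrix (Fin dΘ) (Fin dΘ) ℝ := 1 + (σ ^ 2)⁻¹ • (Fᵀ * F) with hA
  -- A is positive definite, hence invertible
  have hAsd : ((σ ^ 2)⁻¹ • (Fᵀ * F)).PosSemidef := by
    have h1 : (σ ^ 2)⁻¹ • (Fᵀ * F) = ((σ⁻¹) • F)ᵀ * ((σ⁻¹) • F) := by
      rw [Matrix.transpose_smul, Matrix.smul_mul, Matrix.mul_smul, smul_smul,
        ← mul_inv, ← sq]
    rw [h1]
    have := Matrix.posSemidef_conjTranspose_mul_self ((σ⁻¹) • F)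
    simpa [Matrix.conjTranspose_eq_transpose_of_trivial] using this
  have hApos : A.PosDef := Matrix.PosDef.one.add_posSemidef hAsd
  have hSA : S * A = 1 := by
    rw [hS, hA]
    exact Matrix.nonsing_inv_mul _ ((Matrix.isUnit_iff_isUnit_det _).mp hApos.isUnit)
  intro t
  -- position constraint rearranged
  have eqpos : F *ᵥ θ t + σ • η t = y - f := by
    have h := hpos t
    rw [sub_eq_zero] at h
    rw [eq_sub_iff_add_eq]
    calc F *ᵥ θ t + σ • η t + f = F *ᵥ θ t + f + σ • η t := by abel
      _ = y := h
  -- differentiate the momentum constraint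
  have hL : HasDerivAt (fun s => F *ᵥ vθ s + σ • vη s)
      (F *ᵥ (-(θ t) - Fᵀ *ᵥ lam t) + σ • (-(η t) - σ • lam t)) t := by
    have h1 : HasDerivAt (fun s => F *ᵥ vθ s) (F *ᵥ (-(θ t) - Fᵀ *ᵥ lam t)) t := by
      have := ((Matrix.mulVecLin F).toContinuousLinearMap.hasFDerivAt).comp_hasDerivAt
        t (hvθ t)
      simpa [Function.comp_def] using this
    exact h1.add ((hvη t).const_smul σ)
  have hconst : HasDerivAt (fun s => F *ᵥ vθ s + σ • vη s) 0 t := by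
    have hz : (fun s => F *ᵥ vθ s + σ • vη s) = fun _ => (0 : Fin dY → ℝ) :=
      funext hmom
    rw [hz]
    exact hasDerivAt_const t 0
  have key := hL.unique hconst
  -- extract the equation satisfied by the Lagrange multipliers
  have hB : (F * Fᵀ) *ᵥ lam t + (σ ^ 2) • lam t = f - y := by
    have k2 : -(F *ᵥ θ t + σ • η t) - ((F * Fᵀ) *ᵥ lam t + (σ ^ 2) • lam t) = 0 := by
      rw [← key]
      simp only [Matrix.mulVec_sub, Matrix.mulVec_neg, Matrix.mulVec_mulVec,
        smul_sub, smul_neg, smul_smul, ← sq]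
      abel
    rw [eqpos] at k2
    exact ((sub_eq_zero.mp k2).symm.trans (neg_sub y f))
  -- apply Fᵀ
  set w : Fin dΘ → ℝ := Fᵀ *ᵥ lam t with hwdef
  have hC : (Fᵀ * F) *ᵥ w + (σ ^ 2) • w = Fᵀ *ᵥ (f - y) := by
    have := congrArg (Fᵀ *ᵥ ·) hB
    simpa [Matrix.mulVec_add, Matrix.mulVec_smul, Matrix.mulVec_mulVec, hwdef,
      Matrix.mul_assoc] using this
  have hw : A *ᵥ w = (σ ^ 2)⁻¹ • (Fᵀ *ᵥ (f - y)) := by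
    have h2 : (σ ^ 2) • (A *ᵥ w) = Fᵀ *ᵥ (f - y) := by
      rw [hA, Matrix.add_mulVec, Matrix.one_mulVec, Matrix.smul_mulVec,
        smul_add, smul_smul, mul_inv_cancel₀ hσ2, one_smul]
      rw [← hC]; abel
    rw [← h2, smul_smul, inv_mul_cancel₀ hσ2, one_smul]
  have hwμ : w = -μ := by
    calc w = (S * A) *ᵥ w := by rw [hSA, Matrix.one_mulVec]
      _ = S *ᵥ (A *ᵥ w) := by rw [← Matrix.mulVec_mulVec]
      _ = S *ᵥ ((σ ^ 2)⁻¹ • (Fᵀ *ᵥ (f - y))) := by rw [hw]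
      _ = -μ := by
          rw [hμ, show f - y = -(y - f) from by abel]
          simp only [Matrix.mulVec_neg, smul_neg, Matrix.mulVec_smul, neg_inj]
  have hfinal : -(θ t) - Fᵀ *ᵥ lam t = -(θ t - μ) := by
    rw [← hwdef, hwμ]; abel
  rw [← hfinal]
  exact hvθ t
end

section
/- Let F be a real d_Y × d_Θ matrix, f, y ∈ ℝ^{d_Y} and σ > 0. Suppose θ, η, v_θ, v_η, λ are differentiable curves satisfying the constrained linear-Gaussian Hamiltonian dynamics: θ'(t) = v_θ(t), η'(t) = v_η(t), v_θ'(t) = −θ(t) − Fᵀλ(t), v_η'(t) = −η(t) − σλ(t), with constraints Fθ(t) + f + ση(t) − y = 0 and Fv_θ(t) + σv_η(t) = 0 for all t. Then the Lagrange multiplier is constant in time and given explicitly by λ(t) = −(σ²I + FFᵀ)⁻¹(Fθ(t) + ση(t)) = −(σ²I + FFᵀ)⁻¹(y − f) for all t (the matrix σ²I + FFᵀ is positive definite, hence invertible, since σ > 0). -/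
open Matrix

/-- The Lagrange multiplier in the constrained linear-Gaussian Hamiltonian dynamics is
constant in time and given explicitly by
`λ(t) = −(σ²I + FFᵀ)⁻¹(Fθ(t) + ση(t)) = −(σ²I + FFᵀ)⁻¹(y − f)`. -/
theorem stmt1 (dΘ dY : ℕ)
    (F : Matrix (Fin dY) (Fin dΘ) ℝ) (f y : Fin dY → ℝ) (σ : ℝ) (hσ : 0 < σ)
    (θ : ℝ → Fin dΘ → ℝ) (η : ℝ → Fin dY → ℝ)
    (vθ : ℝ → Fin dΘ → ℝ) (vη : ℝ → Fin dY → ℝ) (lam : ℝ → Fin dY → ℝ)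
    (hθ : ∀ t : ℝ, HasDerivAt θ (vθ t) t)
    (hη : ∀ t : ℝ, HasDerivAt η (vη t) t)
    (hvθ : ∀ t : ℝ, HasDerivAt vθ (-(θ t) - Fᵀ *ᵥ lam t) t)
    (hvη : ∀ t : ℝ, HasDerivAt vη (-(η t) - σ • lam t) t)
    (hpos : ∀ t : ℝ, F *ᵥ θ t + f + σ • η t - y = 0)
    (hmom : ∀ t : ℝ, F *ᵥ vθ t + σ • vη t = 0) :
    ∀ t : ℝ,
      lam t = -((σ ^ 2 • (1 : Matrix (Fin dY) (Fin dY) ℝ) + F * Fᵀ)⁻¹ *ᵥ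
          (F *ᵥ θ t + σ • η t)) ∧
      lam t = -((σ ^ 2 • (1 : Matrix (Fin dY) (Fin dY) ℝ) + F * Fᵀ)⁻¹ *ᵥ (y - f)) := by
  intro t
  set M : Matrix (Fin dY) (Fin dY) ℝ :=
    σ ^ 2 • (1 : Matrix (Fin dY) (Fin dY) ℝ) + F * Fᵀ with hM
  -- M is positive definite, hence invertible
  have hMpd : M.PosDef := by
    have h1 : (σ ^ 2 • (1 : Matrix (Fin dY) (Fin dY) ℝ)).PosDef := by
      have : σ ^ 2 • (1 : Matrix (Fin dY) (Fin dY) ℝ)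
          = Matrix.diagonal (fun _ => σ ^ 2) := by
        ext i j
        by_cases h : i = j <;>
          simp [h, Matrix.one_apply, Matrix.diagonal_apply]
      rw [this, Matrix.posDef_diagonal_iff]
      intro _
      positivity
    have h2 : (F * Fᵀ).PosSemidef := by
      simpa using Matrix.posSemidef_self_mul_conjTranspose F
    exact h1.add_posSemidef h2
  have hMdet : IsUnit M.det := (Matrix.isUnit_iff_isUnit_det M).mp hMpd.isUnit
  -- differentiate the momentum constraint
  have L : (Fin dΘ → ℝ) →L[ℝ] (Fin dY → ℝ) :=
    (Matrix.mulVecLin F).toContinuousLinearMap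
  have hd : HasDerivAt (fun s => F *ᵥ vθ s + σ • vη s)
      (F *ᵥ (-(θ t) - Fᵀ *ᵥ lam t) + σ • (-(η t) - σ • lam t)) t := by
    have h1 : HasDerivAt (fun s => F *ᵥ vθ s) (F *ᵥ (-(θ t) - Fᵀ *ᵥ lam t)) t := by
      have := ((Matrix.mulVecLin F).toContinuousLinearMap).hasFDerivAt.comp_hasDerivAt t
        (hvθ t)
      simpa [Function.comp_def] using this
    have h2 : HasDerivAt (fun s => σ • vη s) (σ • (-(η t) - σ • lam t)) t :=
      (hvη t).const_smul σ
    exact h1.add h2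
  have hzero : (fun s => F *ᵥ vθ s + σ • vη s) = fun _ => (0 : Fin dY → ℝ) :=
    funext hmom
  have hd0 : HasDerivAt (fun _ : ℝ => (0 : Fin dY → ℝ)) (0 : Fin dY → ℝ) t :=
    hasDerivAt_const t 0
  have hkey : F *ᵥ (-(θ t) - Fᵀ *ᵥ lam t) + σ • (-(η t) - σ • lam t) = 0 := by
    have := hd.unique (hzero ▸ hd0)
    simpa using this
  -- rearrange: M *ᵥ lam t = -(F *ᵥ θ t + σ • η t)
  have hMlam : M *ᵥ lam t = -(F *ᵥ θ t + σ • η t) := by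
    have expand : F *ᵥ (-(θ t) - Fᵀ *ᵥ lam t) + σ • (-(η t) - σ • lam t)
        = -(F *ᵥ θ t + σ • η t) - M *ᵥ lam t := by
      rw [hM]
      ext i
      simp [Matrix.add_mulVec, Matrix.smul_mulVec, Matrix.one_mulVec,
        Matrix.mulVec_sub, Matrix.mulVec_neg, ← Matrix.mulVec_mulVec, smul_sub, smul_smul, sq]
      ring
    rw [expand] at hkey
    exact (sub_eq_zero.mp hkey).symm
  have h1 : lam t = -(M⁻¹ *ᵥ (F *ᵥ θ t + σ • η t)) := by
    have : M⁻¹ *ᵥ (M *ᵥ lam t) = M⁻¹ *ᵥ (-(F *ᵥ θ t + σ • η t)) := by rw [hMlam]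
    rw [Matrix.mulVec_mulVec, Matrix.nonsing_inv_mul M hMdet, Matrix.one_mulVec,
      Matrix.mulVec_neg] at this
    exact this
  have h2 : F *ᵥ θ t + σ • η t = y - f := by
    have := hpos t
    have h := sub_eq_zero.mp this
    -- F *ᵥ θ t + f + σ • η t = y
    ext i
    have := congrFun h i
    simp only [Pi.add_apply, Pi.sub_apply, Pi.smul_apply, smul_eq_mul] at this ⊢
    linarith
  exact ⟨h1, by rw [h1, h2]⟩
end

section
/- Let F : ℝ^{d_Θ} → ℝ^{d_Y} and σ : ℝ^{d_Θ} → ℝ be differentiable with σ(θ) > 0, and let y ∈ ℝ^{d_Y}. Define η(θ) = (y − F(θ))/σ(θ), A(θ) = DF(θ) + η(θ)Dσ(θ), the metric M(θ) = I_{d_Θ} + σ(θ)⁻² A(θ)ᵀA(θ), the Gram matrix G(θ) = A(θ)A(θ)ᵀ + σ(θ)² I_{d_Y}, and the block matrix Dγ(θ) = [ I_{d_Θ} ; −σ(θ)⁻¹A(θ) ]. Then M(θ) = Dγ(θ)ᵀ Dγ(θ) is positive definite, and for every θ ∈ ℝ^{d_Θ} and p ∈ ℝ^{d_Θ} the Hamiltonian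 pullback identity holds: ½‖θ‖² + ½‖η(θ)‖² + ½·log det G(θ) + ½‖Dγ(θ) M(θ)⁻¹ p‖² = (1/(2σ(θ)²))‖y − F(θ)‖² + d_Y·log σ(θ) + ½‖θ‖² + ½ pᵀ M(θ)⁻¹ p + ½·log det M(θ). -/
open Matrix

/-- Hamiltonian pullback identity at the core of Theorem 2: with `η(θ) = (y − F(θ))/σ(θ)`,
`A(θ) = DF(θ) + η(θ)Dσ(θ)`, metric `M(θ) = I + σ(θ)⁻² A(θ)ᵀA(θ)`, Gram matrix
`G(θ) = A(θ)A(θ)ᵀ + σ(θ)²I` and `Dγ(θ) = [I ; −σ(θ)⁻¹A(θ)]`, we have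
`M(θ) = Dγ(θ)ᵀDγ(θ)` positive definite, and the constrained Hamiltonian evaluated along
the canonical transformation equals the Riemannian-metric Hamiltonian. -/
theorem stmt10 (dΘ dY : ℕ)
    (F : (Fin dΘ → ℝ) → (Fin dY → ℝ)) (σ : (Fin dΘ → ℝ) → ℝ) (y : Fin dY → ℝ)
    (hσ : ∀ θ, 0 < σ θ)
    (DF : (Fin dΘ → ℝ) → ((Fin dΘ → ℝ) →L[ℝ] (Fin dY → ℝ)))
    (Dσ : (Fin dΘ → ℝ) → ((Fin dΘ → ℝ) →L[ℝ] ℝ))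
    (hF : ∀ θ, HasFDerivAt F (DF θ) θ) (hσd : ∀ θ, HasFDerivAt σ (Dσ θ) θ)
    (η : (Fin dΘ → ℝ) → (Fin dY → ℝ)) (hη : ∀ θ, η θ = (σ θ)⁻¹ • (y - F θ))
    (A : (Fin dΘ → ℝ) → Matrix (Fin dY) (Fin dΘ) ℝ)
    (hA : ∀ θ, A θ = LinearMap.toMatrix'
            ((DF θ + (Dσ θ).smulRight (η θ)) :
              (Fin dΘ → ℝ) →L[ℝ] (Fin dY → ℝ)).toLinearMap)
    (M : (Fin dΘ → ℝ) → Matrix (Fin dΘ) (Fin dΘ) ℝ)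
    (hM : ∀ θ, M θ = 1 + (σ θ ^ 2)⁻¹ • ((A θ)ᵀ * A θ))
    (G : (Fin dΘ → ℝ) → Matrix (Fin dY) (Fin dY) ℝ)
    (hG : ∀ θ, G θ = A θ * (A θ)ᵀ + σ θ ^ 2 • 1)
    (Dγ : (Fin dΘ → ℝ) → Matrix (Fin dΘ ⊕ Fin dY) (Fin dΘ) ℝ)
    (hDγ : ∀ θ, Dγ θ = Matrix.fromRows 1 (-(σ θ)⁻¹ • A θ)) :
    ∀ (θ : Fin dΘ → ℝ) (p : Fin dΘ → ℝ),
      (M θ = (Dγ θ)ᵀ * Dγ θ ∧ (M θ).PosDef) ∧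
      (1 / 2) * (θ ⬝ᵥ θ) + (1 / 2) * (η θ ⬝ᵥ η θ) + (1 / 2) * Real.log (G θ).det +
          (1 / 2) * ((Dγ θ *ᵥ ((M θ)⁻¹ *ᵥ p)) ⬝ᵥ (Dγ θ *ᵥ ((M θ)⁻¹ *ᵥ p))) =
        (1 / (2 * σ θ ^ 2)) * ((y - F θ) ⬝ᵥ (y - F θ)) + (dY : ℝ) * Real.log (σ θ) +
          (1 / 2) * (θ ⬝ᵥ θ) + (1 / 2) * (p ⬝ᵥ ((M θ)⁻¹ *ᵥ p)) +
          (1 / 2) * Real.log (M θ).det := by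
  intro θ p
  have hs : (0:ℝ) < σ θ := hσ θ
  have hs0 : σ θ ≠ 0 := ne_of_gt hs
  have hs2 : (σ θ ^ 2 : ℝ) ≠ 0 := pow_ne_zero 2 hs0
  -- M = DγᵀDγ
  have hMeq : M θ = (Dγ θ)ᵀ * Dγ θ := by
    rw [hDγ, hM, Matrix.transpose_fromRows, Matrix.fromCols_mul_fromRows]
    congr 1
    · simp
    · rw [Matrix.transpose_smul, Matrix.smul_mul, Matrix.mul_smul, smul_smul]
      congr 1
      rw [neg_mul_neg, ← mul_inv, ← pow_two]
  -- quadratic form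
  have hquad : ∀ x : Fin dΘ → ℝ, x ⬝ᵥ (M θ *ᵥ x) = (Dγ θ *ᵥ x) ⬝ᵥ (Dγ θ *ᵥ x) := by
    intro x
    rw [hMeq, ← Matrix.mulVec_mulVec, Matrix.dotProduct_mulVec, Matrix.vecMul_transpose]
  have hMpd : (M θ).PosDef := by
    rw [Matrix.posDef_iff_dotProduct_mulVec]
    constructor
    · rw [hMeq]
      show ((Dγ θ)ᵀ * Dγ θ)ᴴ = _
      rw [Matrix.conjTranspose_mul]
      have h1 : ∀ (m n : Type) [Fintype m] [Fintype n] (B : Matrix m n ℝ), Bᴴ = Bᵀ :=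
        fun m n _ _ B => by ext i j; simp
      rw [h1, h1, Matrix.transpose_transpose]
    · intro x hx
      have hstar : (star x : Fin dΘ → ℝ) = x := by funext i; simp
      rw [hstar, hquad]
      have hne : Dγ θ *ᵥ x ≠ 0 := by
        intro h
        apply hx
        funext i
        have h2 := congrFun h (Sum.inl i)
        rw [hDγ, Matrix.fromRows_mulVec] at h2
        simpa [Matrix.one_mulVec] using h2
      exact lt_of_le_of_ne
        (Finset.sum_nonneg fun i _ => mul_self_nonneg _)
        (fun h => hne (dotProduct_self_eq_zero.mp h.symm))
  have hMdet : (0:ℝ) < (M θ).det := hMpd.det_pos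
  -- det G = (σθ²)^dY * det M
  have hGdet : (G θ).det = (σ θ ^ 2) ^ dY * (M θ).det := by
    have h1 : G θ = (σ θ ^ 2) • (1 + (σ θ ^ 2)⁻¹ • (A θ * (A θ)ᵀ)) := by
      rw [hG, smul_add, smul_smul, mul_inv_cancel₀ hs2, one_smul, add_comm]
    rw [h1, Matrix.det_smul]
    congr 1
    · simp
    rw [← Matrix.smul_mul, Matrix.det_one_add_mul_comm, Matrix.mul_smul, ← hM]
  -- invert
  have hMinv : M θ *ᵥ ((M θ)⁻¹ *ᵥ p) = p := by
    rw [Matrix.mulVec_mulVec, Matrix.mul_nonsing_inv _ hMdet.ne'.isUnit, Matrix.one_mulVec]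
  have hkin : (Dγ θ *ᵥ ((M θ)⁻¹ *ᵥ p)) ⬝ᵥ (Dγ θ *ᵥ ((M θ)⁻¹ *ᵥ p))
      = p ⬝ᵥ ((M θ)⁻¹ *ᵥ p) := by
    rw [← hquad, hMinv, dotProduct_comm]
  have hηdot : η θ ⬝ᵥ η θ = (σ θ ^ 2)⁻¹ * ((y - F θ) ⬝ᵥ (y - F θ)) := by
    rw [hη, smul_dotProduct, dotProduct_smul, smul_eq_mul, smul_eq_mul]
    ring
  have hlog : Real.log (G θ).det =
      (dY : ℝ) * (2 * Real.log (σ θ)) + Real.log (M θ).det := by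
    rw [hGdet, Real.log_mul (pow_ne_zero _ hs2) (ne_of_gt hMdet), Real.log_pow,
      Real.log_pow]
    push_cast
    ring
  refine ⟨⟨hMeq, hMpd⟩, ?_⟩
  rw [hkin, hηdot, hlog]
  field_simp
  ring
end
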